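/- Let f : Fin n → ℝ, α > 0, u ∈ ℝ, and X ~ Dir(α·ν₀). Then P(E_X[f] ≥ u) ≤ exp(−α·Kinf(ν₀, u, f)). -/

import Mathlib

open MeasureTheory ProbabilityTheory
open scoped ENNReal

/-- The joint law of `n` independent Gamma random variables `Gᵢ` with shape `α·ν i`
and rate `1`: the Dirichlet random vector is `X = G / ∑ⱼ Gⱼ`. -/
noncomputable def gammaPi {n : ℕ} (α : ℝ) (ν : Fin n → ℝ) : Measure (Fin n → ℝ) :=
  Measure.pi fun i => gammaMeasure (α * ν i) 1

/-- The normalization `g ↦ g / ∑ⱼ gⱼ` turning the Gamma vector into the Dirichlet vector. -/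
noncomputable def dirNorm {n : ℕ} (g : Fin n → ℝ) : Fin n → ℝ :=
  fun i => g i / ∑ j, g j

/-- `p` is a probability vector on `Fin n`. -/
def probVec {n : ℕ} (p : Fin n → ℝ) : Prop :=
  (∀ i, 0 ≤ p i) ∧ ∑ i, p i = 1

/-- Kullback–Leibler divergence between probability vectors on `Fin n`, valued in `EReal`:
`KL(p‖q) = ∑ᵢ p i · log (p i / q i)` if `q i = 0 → p i = 0` for all `i`
(in Lean, `0 * Real.log _ = 0` handles the `0·log 0 = 0` convention), and `+∞` otherwise. -/
noncomputable def klFin {n : ℕ} (p q : Fin n → ℝ) : EReal :=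
  if ∀ i, q i = 0 → p i = 0 then ((∑ i, p i * Real.log (p i / q i) : ℝ) : EReal) else ⊤


/-- `Kinf(ν, u, f) = inf {KL(ν‖μ) : μ a probability vector on Fin n with E_μ[f] ≥ u}`,
with `inf ∅ = +∞` (the `EReal` infimum over an empty set is `⊤`). -/
noncomputable def KinfFin {n : ℕ} (ν : Fin n → ℝ) (u : ℝ) (f : Fin n → ℝ) : EReal :=
  ⨅ μ ∈ {μ : Fin n → ℝ | probVec μ ∧ u ≤ ∑ i, μ i * f i}, klFin ν μ


lemma gamma_exp_moment {a c : ℝ} (ha : 0 < a) (hc : c < 1) :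
    ∫⁻ x, ENNReal.ofReal (Real.exp (c * x)) ∂(gammaMeasure a 1)
      = ENNReal.ofReal ((1 - c) ^ (-a)) := by
  have h1c : (0:ℝ) < 1 - c := by linarith
  have hm : Measurable fun x : ℝ => ENNReal.ofReal (Real.exp (c * x)) :=
    ((measurable_id.const_mul c).exp).ennreal_ofReal
  have hg : ∀ r, Measurable (gammaPDF a r) := fun r =>
    (measurable_gammaPDFReal a r).ennreal_ofReal
  rw [gammaMeasure, lintegral_withDensity_eq_lintegral_mul _ (hg 1) hm]
  have hpt : ∀ x : ℝ, (gammaPDF a 1 * fun x => ENNReal.ofReal (Real.exp (c * x))) x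
      = ENNReal.ofReal ((1 - c) ^ (-a)) * gammaPDF a (1 - c) x := by
    intro x
    rcases le_or_gt 0 x with hx | hx
    · simp only [Pi.mul_apply, gammaPDF_of_nonneg hx]
      rw [← ENNReal.ofReal_mul (by positivity), ← ENNReal.ofReal_mul (by positivity)]
      congr 1
      rw [Real.rpow_neg h1c.le, Real.one_rpow]
      have hne : (1 - c) ^ a ≠ 0 := (Real.rpow_pos_of_pos h1c a).ne'
      have hG : Real.Gamma a ≠ 0 := (Real.Gamma_pos_of_pos ha).ne'
      have hexp : Real.exp (-(1 * x)) * Real.exp (c * x) = Real.exp (-((1 - c) * x)) := by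
        rw [← Real.exp_add]; congr 1; ring
      rw [mul_assoc, hexp]
      field_simp
    · simp [Pi.mul_apply, gammaPDF_of_neg hx]
  rw [lintegral_congr hpt, lintegral_const_mul _ (hg (1-c)),
    lintegral_gammaPDF_eq_one ha h1c, mul_one]

lemma lintegral_pi_prod : ∀ (n : ℕ) (μ : Fin n → Measure ℝ), (∀ i, SigmaFinite (μ i)) →
    ∀ (F : Fin n → ℝ → ℝ≥0∞), (∀ i, Measurable (F i)) →
    ∫⁻ g, ∏ i, F i (g i) ∂Measure.pi μ = ∏ i, ∫⁻ x, F i x ∂(μ i) := by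
  intro n
  induction n with
  | zero =>
    intro μ _ F _
    simp [Measure.pi_of_empty, Finset.univ_eq_empty]
  | succ n ih =>
    intro μ hσ F hF
    haveI := hσ
    have h := (measurePreserving_piFinSuccAbove μ 0).symm
    have key := (h.lintegral_comp_emb (MeasurableEquiv.measurableEmbedding _)
      (fun g => ∏ i, F i (g i))).symm
    rw [key]
    have hprod : ∀ p : ℝ × (Fin n → ℝ),
        (∏ i, F i (((MeasurableEquiv.piFinSuccAbove (fun _ => ℝ) 0).symm p) i))
          = F 0 p.1 * ∏ j : Fin n, F j.succ (p.2 j) := by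
      intro p
      have e : ((MeasurableEquiv.piFinSuccAbove (fun _ => ℝ) 0).symm p) = Fin.cons p.1 p.2 := by
        ext i
        simp [MeasurableEquiv.piFinSuccAbove_symm_apply, Fin.insertNth_zero]
      rw [e, Fin.prod_univ_succ]
      simp [Fin.cons_succ]
    simp_rw [hprod]
    have hf0 : AEMeasurable (F 0) (μ 0) := (hF 0).aemeasurable
    have hg0 : AEMeasurable (fun y : Fin n → ℝ => ∏ j : Fin n, F j.succ (y j))
        (Measure.pi fun j => μ (Fin.succAbove 0 j)) :=
      (Finset.measurable_prod _ fun j _ => (hF j.succ).comp (measurable_pi_apply j)).aemeasurable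
    rw [lintegral_prod_mul hf0 hg0]
    have : (Measure.pi fun j : Fin n => μ (Fin.succAbove 0 j)) = Measure.pi fun j => μ j.succ := by
      simp [Fin.succAbove_zero]
    rw [this, ih (fun j => μ j.succ) (fun j => hσ j.succ) (fun j => F j.succ)
      (fun j => hF j.succ), Fin.prod_univ_succ]

lemma gammaMeasure_Iic_zero {a : ℝ} : gammaMeasure a 1 (Set.Iic 0) = 0 := by
  have h1 : gammaMeasure a 1 (Set.Iio 0) = 0 := by
    rw [gammaMeasure, withDensity_apply _ measurableSet_Iio]
    exact lintegral_gammaPDF_of_nonpos le_rfl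
  have h2 : gammaMeasure a 1 {(0:ℝ)} = 0 := by
    rw [gammaMeasure]
    exact withDensity_absolutelyContinuous _ _ (measure_singleton 0)
  have : Set.Iic (0:ℝ) = Set.Iio 0 ∪ {0} := by
    ext x; simp [le_iff_lt_or_eq]
  rw [this]
  exact le_antisymm ((measure_union_le _ _).trans (by simp [h1, h2])) zero_le

lemma gammaPi_bad_null {n : ℕ} {α : ℝ} {ν₀ : Fin n → ℝ} (ha : ∀ i, 0 < α * ν₀ i) :
    gammaPi α ν₀ {g | ∃ i, g i ≤ 0} = 0 := by
  haveI : ∀ i, IsProbabilityMeasure (gammaMeasure (α * ν₀ i) 1) := fun i =>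
    isProbabilityMeasure_gammaMeasure (ha i) one_pos
  have : {g : Fin n → ℝ | ∃ i, g i ≤ 0} = ⋃ i, Function.eval i ⁻¹' Set.Iic 0 := by
    ext g; simp [Set.mem_iUnion]
  rw [gammaPi, this]
  refine measure_iUnion_null fun i => ?_
  exact Measure.pi_eval_preimage_null (μ := fun i => gammaMeasure (α * ν₀ i) 1)
    gammaMeasure_Iic_zero

lemma chernoff {n : ℕ} (hn : 1 ≤ n) (ν₀ : Fin n → ℝ) (hpos : ∀ i, 0 < ν₀ i)
    (f : Fin n → ℝ) (α : ℝ) (hα : 0 < α) (u : ℝ) (t : ℝ) (ht : 0 ≤ t)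
    (hd : ∀ i, 0 < 1 - t * (f i - u)) :
    gammaPi α ν₀ {g | u ≤ ∑ i, dirNorm g i * f i} ≤
      ENNReal.ofReal (Real.exp (-α * ∑ i, ν₀ i * Real.log (1 - t * (f i - u)))) := by
  haveI : Nonempty (Fin n) := ⟨⟨0, hn⟩⟩
  have ha : ∀ i, 0 < α * ν₀ i := fun i => mul_pos hα (hpos i)
  haveI : ∀ i, IsProbabilityMeasure (gammaMeasure (α * ν₀ i) 1) := fun i =>
    isProbabilityMeasure_gammaMeasure (ha i) one_pos
  set S := {g : Fin n → ℝ | u ≤ ∑ i, dirNorm g i * f i}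
  set bad := {g : Fin n → ℝ | ∃ i, g i ≤ 0}
  set A := {g : Fin n → ℝ | 0 ≤ ∑ i, g i * (f i - u)}
  -- step 1: S is a.e. contained in A
  have hSA : S ⊆ A ∪ bad := by
    intro g hg
    by_cases hb : g ∈ bad
    · exact Or.inr hb
    · refine Or.inl ?_
      simp only [bad, Set.mem_setOf_eq, not_exists, not_le] at hb
      have hgi : ∀ i, 0 < g i := hb
      have hT : 0 < ∑ j, g j := Finset.sum_pos (fun j _ => hgi j) Finset.univ_nonempty
      have hg' : u ≤ (∑ i, g i * f i) / (∑ j, g j) := by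
        have : ∑ i, dirNorm g i * f i = (∑ i, g i * f i) / (∑ j, g j) := by
          rw [Finset.sum_div]
          exact Finset.sum_congr rfl fun i _ => by rw [dirNorm]; ring
        simp only [S, Set.mem_setOf_eq] at hg
        rw [this] at hg; exact hg
      have h2 : u * (∑ j, g j) ≤ ∑ i, g i * f i := (le_div_iff₀ hT).mp hg'
      have : ∑ i, g i * (f i - u) = (∑ i, g i * f i) - u * (∑ j, g j) := by
        rw [Finset.mul_sum, ← Finset.sum_sub_distrib]
        exact Finset.sum_congr rfl fun i _ => by ring
      simp only [A, Set.mem_setOf_eq, this]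
      linarith
  have hstep1 : gammaPi α ν₀ S ≤ gammaPi α ν₀ A := by
    calc gammaPi α ν₀ S ≤ gammaPi α ν₀ (A ∪ bad) := measure_mono hSA
      _ ≤ gammaPi α ν₀ A + gammaPi α ν₀ bad := measure_union_le _ _
      _ = gammaPi α ν₀ A := by rw [gammaPi_bad_null ha, add_zero]
  -- step 2: Chernoff bound on A
  have hAmeas : MeasurableSet A := by
    refine measurableSet_le measurable_const ?_
    exact Finset.measurable_sum _ fun i _ => (measurable_pi_apply i).mul_const _
  have hstep2 : gammaPi α ν₀ A ≤
      ∫⁻ g, ENNReal.ofReal (Real.exp (t * ∑ i, g i * (f i - u))) ∂gammaPi α ν₀ := by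
    rw [← lintegral_indicator_one hAmeas]
    refine lintegral_mono fun g => ?_
    by_cases hgA : g ∈ A
    · rw [Set.indicator_of_mem hgA]
      refine ENNReal.one_le_ofReal.mpr (Real.one_le_exp ?_)
      exact mul_nonneg ht hgA
    · rw [Set.indicator_of_notMem hgA]; exact zero_le
  -- step 3: factorize and compute
  have hfact : ∀ g : Fin n → ℝ, ENNReal.ofReal (Real.exp (t * ∑ i, g i * (f i - u)))
      = ∏ i, ENNReal.ofReal (Real.exp ((t * (f i - u)) * g i)) := by
    intro g
    rw [← ENNReal.ofReal_prod_of_nonneg (fun i _ => (Real.exp_nonneg _)), ← Real.exp_sum]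
    have : t * ∑ i, g i * (f i - u) = ∑ i, (t * (f i - u)) * g i := by
      rw [Finset.mul_sum]
      exact Finset.sum_congr rfl fun i _ => by ring
    rw [this]
  have hstep3 : ∫⁻ g, ENNReal.ofReal (Real.exp (t * ∑ i, g i * (f i - u))) ∂gammaPi α ν₀
      = ∏ i, ENNReal.ofReal ((1 - t * (f i - u)) ^ (-(α * ν₀ i))) := by
    simp_rw [hfact]
    have hFm : ∀ i : Fin n, Measurable (fun x : ℝ => ENNReal.ofReal (Real.exp ((t * (f i - u)) * x))) :=
      fun i => by fun_prop
    rw [gammaPi, lintegral_pi_prod n (fun i => gammaMeasure (α * ν₀ i) 1) (fun i => inferInstance)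
      (fun i x => ENNReal.ofReal (Real.exp ((t * (f i - u)) * x))) hFm]
    exact Finset.prod_congr rfl fun i _ => gamma_exp_moment (ha i) (by linarith [hd i])
  -- step 4: identify with the exp expression
  have hstep4 : ∏ i, ENNReal.ofReal ((1 - t * (f i - u)) ^ (-(α * ν₀ i)))
      = ENNReal.ofReal (Real.exp (-α * ∑ i, ν₀ i * Real.log (1 - t * (f i - u)))) := by
    rw [← ENNReal.ofReal_prod_of_nonneg (fun i _ => (Real.rpow_nonneg (hd i).le _))]
    congr 1
    have : ∀ i, (1 - t * (f i - u)) ^ (-(α * ν₀ i))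
        = Real.exp (-α * (ν₀ i * Real.log (1 - t * (f i - u)))) := by
      intro i
      rw [Real.rpow_def_of_pos (hd i)]
      congr 1; ring
    simp_rw [this]
    rw [← Real.exp_sum, ← Finset.mul_sum]
  calc gammaPi α ν₀ S ≤ _ := hstep1.trans hstep2
    _ = _ := by rw [hstep3, hstep4]

lemma key_le {n : ℕ} (ν₀ : Fin n → ℝ) (hpos : ∀ i, 0 < ν₀ i) (hsum : ∑ i, ν₀ i = 1)
    (f : Fin n → ℝ) (u : ℝ) (t : ℝ)
    (hd : ∀ i, 0 < 1 - t * (f i - u))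
    (hφ : 0 ≤ ∑ i, ν₀ i * (f i - u) / (1 - t * (f i - u)))
    (hφ0 : t * ∑ i, ν₀ i * (f i - u) / (1 - t * (f i - u)) = 0) :
    KinfFin ν₀ u f ≤ ((∑ i, ν₀ i * Real.log (1 - t * (f i - u)) : ℝ) : EReal) := by
  set d : Fin n → ℝ := fun i => 1 - t * (f i - u) with hdd
  set μ : Fin n → ℝ := fun i => ν₀ i / d i with hμd
  have hμpos : ∀ i, 0 < μ i := fun i => div_pos (hpos i) (hd i)
  have h1 : ∀ i, μ i * (f i - u) = ν₀ i * (f i - u) / d i := fun i => by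
    simp only [hμd]; ring
  have hφ' : ∑ i, μ i * (f i - u) = ∑ i, ν₀ i * (f i - u) / (1 - t * (f i - u)) :=
    Finset.sum_congr rfl fun i _ => h1 i
  have h3 : ∀ i, ν₀ i = μ i - t * (μ i * (f i - u)) := by
    intro i
    have hdne : d i ≠ 0 := (hd i).ne'
    simp only [hμd]
    field_simp
    ring
  have hμsum : ∑ i, μ i = 1 := by
    have : ∑ i, ν₀ i = ∑ i, μ i - t * ∑ i, μ i * (f i - u) := by
      rw [Finset.mul_sum, ← Finset.sum_sub_distrib]
      exact Finset.sum_congr rfl fun i _ => h3 i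
    rw [hsum, hφ', hφ0] at this
    linarith
  have hEf : u ≤ ∑ i, μ i * f i := by
    have : ∑ i, μ i * f i = (∑ i, μ i * (f i - u)) + u * ∑ i, μ i := by
      rw [Finset.mul_sum, ← Finset.sum_add_distrib]
      exact Finset.sum_congr rfl fun i _ => by ring
    rw [this, hμsum, hφ']
    linarith
  have hmem : μ ∈ {μ : Fin n → ℝ | probVec μ ∧ u ≤ ∑ i, μ i * f i} :=
    ⟨⟨fun i => (hμpos i).le, hμsum⟩, hEf⟩
  have hkl : klFin ν₀ μ = ((∑ i, ν₀ i * Real.log (1 - t * (f i - u)) : ℝ) : EReal) := by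
    rw [klFin, if_pos fun i h => absurd h (hμpos i).ne']
    congr 1
    refine Finset.sum_congr rfl fun i _ => ?_
    have : ν₀ i / μ i = d i := by
      simp only [hμd]
      rw [div_div_eq_mul_div, mul_comm, mul_div_assoc, div_self (hpos i).ne', mul_one]
    rw [this]
  calc KinfFin ν₀ u f ≤ klFin ν₀ μ := iInf₂_le μ hmem
    _ = _ := hkl

lemma kinf_top {n : ℕ} (ν₀ : Fin n → ℝ) (hpos : ∀ i, 0 < ν₀ i)
    (f : Fin n → ℝ) (u : ℝ) (hub : ∀ i, f i ≤ u) (i₁ : Fin n) (hi₁ : f i₁ < u) :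
    KinfFin ν₀ u f = ⊤ := by
  rw [KinfFin, iInf₂_eq_top]
  rintro μ ⟨⟨hnn, hs1⟩, hEf⟩
  rw [klFin, if_neg]
  push_neg
  refine ⟨i₁, ?_, (hpos i₁).ne'⟩
  have hle : ∑ i, μ i * f i ≤ u := by
    calc ∑ i, μ i * f i ≤ ∑ i, μ i * u :=
          Finset.sum_le_sum fun i _ => mul_le_mul_of_nonneg_left (hub i) (hnn i)
      _ = u := by rw [← Finset.sum_mul, hs1, one_mul]
  have hzero : ∑ i, μ i * (u - f i) = 0 := by
    have : ∑ i, μ i * (u - f i) = (∑ i, μ i) * u - ∑ i, μ i * f i := by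
      rw [Finset.sum_mul, ← Finset.sum_sub_distrib]
      exact Finset.sum_congr rfl fun i _ => by ring
    rw [this, hs1, one_mul]
    linarith
  have := (Finset.sum_eq_zero_iff_of_nonneg
    (fun i _ => mul_nonneg (hnn i) (by linarith [hub i]))).mp hzero i₁ (Finset.mem_univ i₁)
  rcases mul_eq_zero.mp this with h | h
  · exact h
  · linarith

lemma exists_t {n : ℕ} (ν₀ : Fin n → ℝ) (hpos : ∀ i, 0 < ν₀ i) (hsum : ∑ i, ν₀ i = 1)
    (f : Fin n → ℝ) (u : ℝ) (hlt : ∑ i, ν₀ i * f i < u) (i' : Fin n) (hi' : u < f i') :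
    ∃ t : ℝ, 0 ≤ t ∧ (∀ i, 0 < 1 - t * (f i - u)) ∧
      ∑ i, ν₀ i * (f i - u) / (1 - t * (f i - u)) = 0 := by
  classical
  obtain ⟨i₀, -, hmax⟩ := Finset.exists_max_image Finset.univ f ⟨i', Finset.mem_univ i'⟩
  have hmax : ∀ i, f i ≤ f i₀ := fun i => hmax i (Finset.mem_univ i)
  set B : ℝ := f i₀ - u with hB
  have hB0 : 0 < B := by have := hmax i'; simp only [hB]; linarith
  set w : ℝ := ν₀ i₀ with hw
  have hw0 : 0 < w := hpos i₀
  set C : ℝ := ∑ i, ν₀ i * |f i - u| with hC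
  have hC0 : 0 ≤ C := Finset.sum_nonneg fun i _ => mul_nonneg (hpos i).le (abs_nonneg _)
  set ε : ℝ := min 1 (w * B / (C + 1)) with hε
  have hε0 : 0 < ε := lt_min one_pos (div_pos (mul_pos hw0 hB0) (by linarith))
  have hε1 : ε ≤ 1 := min_le_left _ _
  set t₁ : ℝ := (1 - ε / 2) / B with ht₁
  have ht₁0 : 0 ≤ t₁ := div_nonneg (by linarith) hB0.le
  have ht₁B : t₁ * B = 1 - ε / 2 := by
    rw [ht₁, div_mul_cancel₀ _ hB0.ne']
  set φ : ℝ → ℝ := fun t => ∑ i, ν₀ i * (f i - u) / (1 - t * (f i - u)) with hφdef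
  -- positivity of denominators on [0, t₁]
  have hden : ∀ t ∈ Set.Icc 0 t₁, ∀ i, 0 < 1 - t * (f i - u) := by
    rintro t ⟨ht0, htt₁⟩ i
    rcases le_or_gt (f i - u) 0 with h | h
    · nlinarith
    · have h1 : t * (f i - u) ≤ t₁ * (f i - u) := by nlinarith
      have h2 : t₁ * (f i - u) ≤ t₁ * B := by
        have : f i - u ≤ B := by have := hmax i; simp only [hB]; linarith
        nlinarith
      rw [ht₁B] at h2
      linarith [hε0]
  -- φ 0 < 0
  have hφ0 : φ 0 < 0 := by
    simp only [hφdef, zero_mul, sub_zero, div_one]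
    have : ∑ i, ν₀ i * (f i - u) = (∑ i, ν₀ i * f i) - u * ∑ i, ν₀ i := by
      rw [Finset.mul_sum, ← Finset.sum_sub_distrib]
      exact Finset.sum_congr rfl fun i _ => by ring
    rw [this, hsum]
    linarith
  -- φ t₁ ≥ 0
  have hφt₁ : 0 ≤ φ t₁ := by
    have hd := hden t₁ ⟨ht₁0, le_rfl⟩
    have hlb : ∀ i, (if i = i₀ then w * B / (ε / 2) else -(ν₀ i * |f i - u|))
        ≤ ν₀ i * (f i - u) / (1 - t₁ * (f i - u)) := by
      intro i
      by_cases hii : i = i₀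
      · rw [hii, if_pos rfl]
        have h2 : 1 - t₁ * (f i₀ - u) = ε / 2 := by rw [← hB, ht₁B]; ring
        rw [h2, ← hB, ← hw]
      · rw [if_neg hii]
        rcases le_or_gt (f i - u) 0 with h | h
        · have hd1 : (1:ℝ) ≤ 1 - t₁ * (f i - u) := by nlinarith
          have habs : |f i - u| = -(f i - u) := abs_of_nonpos h
          rw [habs, div_eq_mul_inv]
          have hinv : (1 - t₁ * (f i - u))⁻¹ ≤ 1 := by
            rw [inv_le_one_iff₀]; right; exact hd1
          have hinv0 : 0 < (1 - t₁ * (f i - u))⁻¹ := inv_pos.mpr (hd i)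
          nlinarith [mul_nonpos_of_nonneg_of_nonpos (hpos i).le h]
        · have h5 : 0 ≤ ν₀ i * (f i - u) / (1 - t₁ * (f i - u)) :=
            div_nonneg (mul_nonneg (hpos i).le h.le) (hd i).le
          have h6 : -(ν₀ i * |f i - u|) ≤ 0 := neg_nonpos.mpr
            (mul_nonneg (hpos i).le (abs_nonneg _))
          linarith
    have hsumlb : ∑ i, (if i = i₀ then w * B / (ε / 2) else -(ν₀ i * |f i - u|)) ≤ φ t₁ :=
      Finset.sum_le_sum fun i _ => hlb i
    have hsplit : ∑ i, (if i = i₀ then w * B / (ε / 2) else -(ν₀ i * |f i - u|))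
        = w * B / (ε / 2) + ∑ i ∈ Finset.univ.erase i₀, -(ν₀ i * |f i - u|) := by
      rw [← Finset.add_sum_erase _ _ (Finset.mem_univ i₀), if_pos rfl]
      congr 1
      exact Finset.sum_congr rfl fun i hi => by
        rw [if_neg (Finset.ne_of_mem_erase hi)]
    have hC' : -C ≤ ∑ i ∈ Finset.univ.erase i₀, -(ν₀ i * |f i - u|) := by
      have h4 : ∑ i ∈ Finset.univ.erase i₀, ν₀ i * |f i - u| ≤ C :=
        Finset.sum_le_sum_of_subset_of_nonneg (Finset.subset_univ _)
          (fun i _ _ => mul_nonneg (hpos i).le (abs_nonneg _))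
      have h5 : ∑ i ∈ Finset.univ.erase i₀, -(ν₀ i * |f i - u|)
          = -(∑ i ∈ Finset.univ.erase i₀, ν₀ i * |f i - u|) := Finset.sum_neg_distrib _
      rw [h5]
      linarith
    have hbig : C + 1 ≤ w * B / (ε / 2) := by
      have h1 : ε ≤ w * B / (C + 1) := min_le_right _ _
      rw [le_div_iff₀ (by linarith : (0:ℝ) < ε / 2)]
      have := (le_div_iff₀ (by linarith : (0:ℝ) < C + 1)).mp h1
      nlinarith
    linarith
  -- IVT
  have hcont : ContinuousOn φ (Set.Icc 0 t₁) := by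
    refine continuousOn_finset_sum _ fun i _ => ?_
    refine ContinuousOn.div continuousOn_const ?_ ?_
    · exact (continuous_const.sub (continuous_id.mul continuous_const)).continuousOn
    · exact fun t ht => (hden t ht i).ne'
  have h0mem : (0:ℝ) ∈ Set.Icc (φ 0) (φ t₁) := ⟨hφ0.le, hφt₁⟩
  obtain ⟨t, htmem, htval⟩ := intermediate_value_Icc ht₁0 hcont h0mem
  exact ⟨t, htmem.1, hden t htmem, htval⟩

lemma glue {α L : ℝ} (hα : 0 < α) {P : ℝ≥0∞} {K : EReal}
    (h1 : P ≤ ENNReal.ofReal (Real.exp (-α * L))) (h2 : K ≤ (L : EReal)) :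
    P ≤ EReal.exp (-((α : EReal) * K)) := by
  have hmul : (α : EReal) * K ≤ (α : EReal) * (L : EReal) := by
    induction K using EReal.rec with
    | bot => rw [EReal.coe_mul_bot_of_pos hα]; exact bot_le
    | coe r =>
      rw [← EReal.coe_mul, ← EReal.coe_mul]
      exact_mod_cast mul_le_mul_of_nonneg_left (by exact_mod_cast h2) hα.le
    | top => exact absurd (top_le_iff.mp h2) (EReal.coe_ne_top L)
  have hneg : -((α : EReal) * (L : EReal)) ≤ -((α : EReal) * K) :=
    EReal.neg_le_neg_iff.mpr hmul
  calc P ≤ ENNReal.ofReal (Real.exp (-α * L)) := h1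
    _ = EReal.exp ((-(α * L) : ℝ) : EReal) := by rw [EReal.exp_coe, neg_mul]
    _ = EReal.exp (-((α : EReal) * (L : EReal))) := by norm_cast
    _ ≤ _ := EReal.exp_monotone hneg

/-- Let `f : Fin n → ℝ`, `α > 0`, `u ∈ ℝ`, and `X ~ Dir(α·ν₀)`. Then
`P(E_X[f] ≥ u) ≤ exp(−α·Kinf(ν₀, u, f))` (with `exp(−∞) = 0`, via `EReal.exp`). -/
theorem stmt4 {n : ℕ} (hn : 1 ≤ n) (ν₀ : Fin n → ℝ) (hpos : ∀ i, 0 < ν₀ i)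
    (hsum : ∑ i, ν₀ i = 1) (f : Fin n → ℝ) (α : ℝ) (hα : 0 < α) (u : ℝ) :
    gammaPi α ν₀ {g | u ≤ ∑ i, dirNorm g i * f i} ≤
      EReal.exp (-((α : EReal) * KinfFin ν₀ u f)) := by
  haveI : Nonempty (Fin n) := ⟨⟨0, hn⟩⟩
  by_cases hA : u ≤ ∑ i, ν₀ i * f i
  · -- trivial case : t = 0
    have hd : ∀ i, 0 < 1 - (0:ℝ) * (f i - u) := fun i => by norm_num
    have hφ : 0 ≤ ∑ i, ν₀ i * (f i - u) / (1 - (0:ℝ) * (f i - u)) := by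
      simp only [zero_mul, sub_zero, div_one]
      have : ∑ i, ν₀ i * (f i - u) = (∑ i, ν₀ i * f i) - u * ∑ i, ν₀ i := by
        rw [Finset.mul_sum, ← Finset.sum_sub_distrib]
        exact Finset.sum_congr rfl fun i _ => by ring
      rw [this, hsum]
      linarith
    exact glue hα (chernoff hn ν₀ hpos f α hα u 0 le_rfl hd)
      (key_le ν₀ hpos hsum f u 0 hd hφ (zero_mul _))
  · push_neg at hA
    by_cases hB : ∃ i, u < f i
    · obtain ⟨i', hi'⟩ := hB
      obtain ⟨t, ht0, hd, hφeq⟩ := exists_t ν₀ hpos hsum f u hA i' hi'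
      exact glue hα (chernoff hn ν₀ hpos f α hα u t ht0 hd)
        (key_le ν₀ hpos hsum f u t hd hφeq.ge (by rw [hφeq, mul_zero]))
    · push_neg at hB
      obtain ⟨i₁, hi₁⟩ : ∃ i₁, f i₁ < u := by
        by_contra h
        push_neg at h
        have : ∀ i, f i = u := fun i => le_antisymm (hB i) (h i)
        have : ∑ i, ν₀ i * f i = u := by
          simp_rw [this]
          rw [← Finset.sum_mul, hsum, one_mul]
        linarith
      rw [kinf_top ν₀ hpos f u hB i₁ hi₁, EReal.coe_mul_top_of_pos hα]
      have hrhs : EReal.exp (-(⊤ : EReal)) = 0 := by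
        rw [EReal.neg_top, EReal.exp_bot]
      rw [hrhs]
      have hSbad : {g : Fin n → ℝ | u ≤ ∑ i, dirNorm g i * f i} ⊆ {g | ∃ i, g i ≤ 0} := by
        intro g hg
        by_contra hb
        simp only [Set.mem_setOf_eq, not_exists, not_le] at hb
        have hT : 0 < ∑ j, g j := Finset.sum_pos (fun j _ => hb j) Finset.univ_nonempty
        have hlt : ∑ i, dirNorm g i * f i < u := by
          have h1 : ∑ i, dirNorm g i * f i < ∑ i, dirNorm g i * u := by
            refine Finset.sum_lt_sum (fun i _ => ?_) ⟨i₁, Finset.mem_univ i₁, ?_⟩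
            · exact mul_le_mul_of_nonneg_left (hB i)
                (div_nonneg (hb i).le hT.le)
            · exact mul_lt_mul_of_pos_left hi₁ (div_pos (hb i₁) hT)
          have h2 : ∑ i, dirNorm g i * u = u := by
            simp only [dirNorm]
            rw [← Finset.sum_mul, ← Finset.sum_div, div_self hT.ne', one_mul]
          rw [h2] at h1
          exact h1
        exact absurd hg (by simpa using not_le.mpr hlt)
      rw [measure_mono_null hSbad (gammaPi_bad_null fun i => mul_pos hα (hpos i))]
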